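/- Let n : ℕ, let w : Fin n → Fin n → ℝ be symmetric with w i j ≥ 0 for all i, j, let B ⊆ Fin n be a nonempty set of boundary vertices, and let u : Fin n → ℝ satisfy the discrete Laplace equation at every interior vertex: for all i ∉ B, ∑_j w i j * (u i − u j) = 0. Assume every interior vertex is connected to the boundary through positive weights: for every i ∉ B there exist m ≥ 1 and indices i = k₀, k₁, …, k_m with w k_t k_{t+1} > 0 for all t < m and k_m ∈ B. Then for every vertex i, min_{b ∈ B} u b ≤ u i ≤ max_{b ∈ B} u b (weak discrete maximum principle). -/
import Mathlib

lemma aux_max_principle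
    (n : ℕ) (w : Fin n → Fin n → ℝ)
    (hw : ∀ i j, 0 ≤ w i j)
    (B : Finset (Fin n)) (u : Fin n → ℝ)
    (harm : ∀ i ∉ B, ∑ j, w i j * (u i - u j) = 0)
    (conn : ∀ i ∉ B, ∃ m : ℕ, 1 ≤ m ∧ ∃ k : Fin (m + 1) → Fin n,
      k 0 = i ∧ (∀ t : Fin m, 0 < w (k t.castSucc) (k t.succ)) ∧ k (Fin.last m) ∈ B) :
    ∀ i, ∃ b ∈ B, u i ≤ u b := by
  intro i
  -- global maximizer
  have hne : (Finset.univ : Finset (Fin n)).Nonempty := ⟨i, Finset.mem_univ i⟩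
  obtain ⟨x, -, hx⟩ := Finset.exists_max_image Finset.univ u hne
  have hx' : ∀ j, u j ≤ u x := fun j => hx j (Finset.mem_univ j)
  suffices h : ∃ b ∈ B, u x ≤ u b by
    obtain ⟨b, hb, hub⟩ := h
    exact ⟨b, hb, le_trans (hx' i) hub⟩
  -- step lemma
  have step : ∀ p ∉ B, (∀ j, u j ≤ u p) → ∀ q, 0 < w p q → u q = u p := by
    intro p hp hmax q hq
    have h0 := harm p hp
    have hterm : ∀ j ∈ Finset.univ, (0:ℝ) ≤ w p j * (u p - u j) :=
      fun j _ => mul_nonneg (hw p j) (sub_nonneg.2 (hmax j))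
    have := (Finset.sum_eq_zero_iff_of_nonneg hterm).1 h0 q (Finset.mem_univ q)
    have h2 : u p - u q = 0 := by
      rcases mul_eq_zero.1 this with h | h
      · exact absurd h (ne_of_gt hq)
      · exact h
    linarith
  by_cases hxB : x ∈ B
  · exact ⟨x, hxB, le_refl _⟩
  obtain ⟨m, hm, k, hk0, hkw, hkB⟩ := conn x hxB
  have main : ∀ t (ht : t ≤ m), (∃ b ∈ B, u x ≤ u b) ∨ u (k ⟨t, Nat.lt_succ_of_le ht⟩) = u x := by
    intro t
    induction t with
    | zero =>
      intro _
      right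
      have : (⟨0, Nat.lt_succ_of_le (Nat.zero_le m)⟩ : Fin (m+1)) = 0 := rfl
      rw [this, hk0]
    | succ t ih =>
      intro ht
      rcases ih (Nat.le_of_succ_le ht) with h | h
      · exact Or.inl h
      · set p := k ⟨t, Nat.lt_succ_of_le (Nat.le_of_succ_le ht)⟩ with hp
        by_cases hpB : p ∈ B
        · exact Or.inl ⟨p, hpB, le_of_eq h.symm⟩
        · right
          have hmax : ∀ j, u j ≤ u p := fun j => h ▸ hx' j
          have hpos := hkw ⟨t, Nat.lt_of_succ_le ht⟩
          have hcs : (Fin.castSucc ⟨t, Nat.lt_of_succ_le ht⟩ : Fin (m+1)) =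
              ⟨t, Nat.lt_succ_of_le (Nat.le_of_succ_le ht)⟩ := rfl
          have hsu : (Fin.succ ⟨t, Nat.lt_of_succ_le ht⟩ : Fin (m+1)) =
              ⟨t+1, Nat.lt_succ_of_le ht⟩ := rfl
          rw [hcs, hsu] at hpos
          have := step p hpB hmax _ hpos
          rw [this, h]
  rcases main m le_rfl with h | h
  · exact h
  · refine ⟨k (Fin.last m), hkB, ?_⟩
    have : (Fin.last m) = ⟨m, Nat.lt_succ_of_le le_rfl⟩ := rfl
    rw [this, h]

theorem weak_discrete_maximum_principle
    (n : ℕ) (w : Fin n → Fin n → ℝ) (hsym : ∀ i j, w i j = w j i)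
    (hw : ∀ i j, 0 ≤ w i j)
    (B : Finset (Fin n)) (hB : B.Nonempty) (u : Fin n → ℝ)
    (harm : ∀ i ∉ B, ∑ j, w i j * (u i - u j) = 0)
    (conn : ∀ i ∉ B, ∃ m : ℕ, 1 ≤ m ∧ ∃ k : Fin (m + 1) → Fin n,
      k 0 = i ∧ (∀ t : Fin m, 0 < w (k t.castSucc) (k t.succ)) ∧ k (Fin.last m) ∈ B) :
    ∀ i, B.inf' hB u ≤ u i ∧ u i ≤ B.sup' hB u := by
  intro i
  constructor
  · -- min side: apply aux to -u
    have harm' : ∀ p ∉ B, ∑ j, w p j * ((fun x => -u x) p - (fun x => -u x) j) = 0 := by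
      intro p hp
      have h := harm p hp
      have : ∑ j, w p j * (-u p - -u j) = -∑ j, w p j * (u p - u j) := by
        rw [← Finset.sum_neg_distrib]
        exact Finset.sum_congr rfl fun j _ => by ring
      simpa [this, h]
    obtain ⟨b, hb, hub⟩ := aux_max_principle n w hw B (fun x => -u x) harm' conn i
    have : u b ≤ u i := by simpa using hub
    exact le_trans (Finset.inf'_le u hb) this
  · obtain ⟨b, hb, hub⟩ := aux_max_principle n w hw B u harm conn i
    exact le_trans hub (Finset.le_sup' u hb)
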